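/- Let s : ℝ^d → ℝ be σ-strongly convex and L-smooth with minimizer x* and suppose a sequence x_1, ..., x_T satisfies, for subgradient-coinciding losses ℓ_t with ℓ_t(x_t) = s(x_t), ℓ_t(x) ≤ s(x) for all x, ∇ℓ_t(x_t) = ∇s(x_t), and the weighted regret bound Σ_t α_t(ℓ_t(x_t) − ℓ_t(x*)) ≤ (1/(2σ)) Σ_t α_t / (Σ_{τ≤t} α_τ) with α_t = ‖∇ℓ_t(x_t)‖^{−2} and ‖∇ℓ_t(x_t)‖ ≤ G. Then T ≤ (L/σ)(1 + log(G² Σ_t α_t)), and consequently Σ_t α_t ≥ (1/(3G²)) e^{(σ/L)T} whenever T ≥ (L/σ) log 3. -/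

import Mathlib

open scoped RealInnerProductSpace

private lemma descent_lemma {E : Type*} [NormedAddCommGroup E] [InnerProductSpace ℝ E]
    [CompleteSpace E] (s : E → ℝ) (s' : E → E) (L : ℝ) (hL : 0 ≤ L)
    (hsdiff : ∀ x, HasGradientAt s (s' x) x)
    (hsmooth : ∀ u v, ‖s' u - s' v‖ ≤ L * ‖u - v‖) (x v : E) :
    s (x + v) ≤ s x + ⟪s' x, v⟫ + L / 2 * ‖v‖ ^ 2 := by
  set F : ℝ → ℝ := fun t => s (x + t • v) - t * ⟪s' x, v⟫ - L / 2 * ‖v‖ ^ 2 * t ^ 2 with hF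
  have hline : ∀ t : ℝ, HasDerivAt (fun t : ℝ => x + t • v) v t := by
    intro t
    simpa using ((hasDerivAt_id t).smul_const v).const_add x
  have hcomp : ∀ t : ℝ, HasDerivAt (fun t : ℝ => s (x + t • v)) ⟪s' (x + t • v), v⟫ t := by
    intro t
    have h := (hsdiff (x + t • v)).hasFDerivAt.comp_hasDerivAt t (hline t)
    simpa [InnerProductSpace.toDual_apply_apply, Function.comp_def] using h
  have hFd : ∀ t : ℝ, HasDerivAt F (⟪s' (x + t • v) - s' x, v⟫ - L * ‖v‖ ^ 2 * t) t := by
    intro t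
    have h2 : HasDerivAt (fun t : ℝ => t * ⟪s' x, v⟫) ⟪s' x, v⟫ t := by
      simpa using (hasDerivAt_id t).mul_const ⟪s' x, v⟫
    have h3 : HasDerivAt (fun t : ℝ => L / 2 * ‖v‖ ^ 2 * t ^ 2) (L * ‖v‖ ^ 2 * t) t := by
      have := (hasDerivAt_pow 2 t).const_mul (L / 2 * ‖v‖ ^ 2)
      refine this.congr_deriv ?_
      push_cast
      ring
    have h := ((hcomp t).sub h2).sub h3
    have e : ⟪s' (x + t • v), v⟫ - ⟪s' x, v⟫ - L * ‖v‖ ^ 2 * t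
        = ⟪s' (x + t • v) - s' x, v⟫ - L * ‖v‖ ^ 2 * t := by
      rw [inner_sub_left]
    rw [← e]
    exact h
  have hanti : AntitoneOn F (Set.Icc (0:ℝ) 1) := by
    apply antitoneOn_of_deriv_nonpos (convex_Icc 0 1)
    · exact (Differentiable.continuous (fun t => (hFd t).differentiableAt)).continuousOn
    · exact Differentiable.differentiableOn (fun t => (hFd t).differentiableAt)
    · intro t ht
      rw [interior_Icc] at ht
      rw [(hFd t).deriv]
      have h1 : ⟪s' (x + t • v) - s' x, v⟫ ≤ ‖s' (x + t • v) - s' x‖ * ‖v‖ :=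
        real_inner_le_norm _ _
      have h2 : ‖s' (x + t • v) - s' x‖ ≤ L * (t * ‖v‖) := by
        have := hsmooth (x + t • v) x
        simpa [norm_smul, abs_of_pos ht.1] using this
      nlinarith [norm_nonneg v, ht.1.le]
  have h01 := hanti (Set.left_mem_Icc.2 zero_le_one) (Set.right_mem_Icc.2 zero_le_one) zero_le_one
  have hF0 : F 0 = s x := by simp [hF]
  have hF1 : F 1 = s (x + v) - ⟪s' x, v⟫ - L / 2 * ‖v‖ ^ 2 := by simp [hF]
  rw [hF0, hF1] at h01
  linarith

private lemma gradsq_lemma {E : Type*} [NormedAddCommGroup E] [InnerProductSpace ℝ E]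
    [CompleteSpace E] (s : E → ℝ) (s' : E → E) (L : ℝ) (hL : 0 < L)
    (hsdiff : ∀ x, HasGradientAt s (s' x) x)
    (hsmooth : ∀ u v, ‖s' u - s' v‖ ≤ L * ‖u - v‖)
    (xstar : E) (hmin : ∀ y, s xstar ≤ s y) (x : E) :
    ‖s' x‖ ^ 2 ≤ 2 * L * (s x - s xstar) := by
  have h := descent_lemma s s' L hL.le hsdiff hsmooth x (-(L⁻¹ • s' x))
  have h2 : s xstar ≤ s (x + -(L⁻¹ • s' x)) := hmin _
  have e1 : ⟪s' x, -(L⁻¹ • s' x)⟫ = -(L⁻¹ * ‖s' x‖ ^ 2) := by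
    rw [inner_neg_right, real_inner_smul_right, real_inner_self_eq_norm_sq]
  have e2 : ‖-(L⁻¹ • s' x)‖ ^ 2 = L⁻¹ ^ 2 * ‖s' x‖ ^ 2 := by
    rw [norm_neg, norm_smul, mul_pow, Real.norm_eq_abs, sq_abs]
  rw [e1, e2] at h
  have key : L⁻¹ * ‖s' x‖ ^ 2 - L / 2 * (L⁻¹ ^ 2 * ‖s' x‖ ^ 2) = ‖s' x‖ ^ 2 / (2 * L) := by
    field_simp
    ring
  have h3 : ‖s' x‖ ^ 2 / (2 * L) ≤ s x - s xstar := by linarith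
  rw [div_le_iff₀ (by positivity)] at h3
  linarith

private lemma log_sum_aux (a : ℕ → ℝ) (ha : ∀ t, 0 < a t) :
    ∀ T, 1 ≤ T →
      ∑ t ∈ Finset.range T, a t / (∑ τ ∈ Finset.range (t + 1), a τ) ≤
        1 + Real.log (∑ t ∈ Finset.range T, a t) - Real.log (a 0) := by
  intro T hT
  induction T, hT using Nat.le_induction with
  | base => simp [div_self (ha 0).ne']
  | succ n hn ih =>
    have hP : 0 < ∑ t ∈ Finset.range n, a t :=
      Finset.sum_pos (fun i _ => ha i) (by simp [Finset.nonempty_range_iff]; omega)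
    have hS : 0 < ∑ t ∈ Finset.range (n + 1), a t :=
      Finset.sum_pos (fun i _ => ha i) (by simp)
    have e1 : ∑ t ∈ Finset.range (n + 1), a t / (∑ τ ∈ Finset.range (t + 1), a τ)
        = (∑ t ∈ Finset.range n, a t / (∑ τ ∈ Finset.range (t + 1), a τ))
          + a n / (∑ τ ∈ Finset.range (n + 1), a τ) := Finset.sum_range_succ _ n
    have e2 : ∑ t ∈ Finset.range (n + 1), a t = (∑ t ∈ Finset.range n, a t) + a n :=
      Finset.sum_range_succ _ n
    have key : a n / (∑ τ ∈ Finset.range (n + 1), a τ) ≤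
        Real.log (∑ t ∈ Finset.range (n + 1), a t) - Real.log (∑ t ∈ Finset.range n, a t) := by
      have h1 : Real.log ((∑ t ∈ Finset.range n, a t) / (∑ t ∈ Finset.range (n + 1), a t)) ≤
          (∑ t ∈ Finset.range n, a t) / (∑ t ∈ Finset.range (n + 1), a t) - 1 :=
        Real.log_le_sub_one_of_pos (div_pos hP hS)
      rw [Real.log_div hP.ne' hS.ne'] at h1
      have h2 : (∑ t ∈ Finset.range n, a t) / (∑ t ∈ Finset.range (n + 1), a t) - 1 =
          -(a n / (∑ t ∈ Finset.range (n + 1), a t)) := by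
        field_simp
        linarith [e2]
      linarith
    rw [e1]
    linarith

theorem stmt_19 {d : ℕ} (s : EuclideanSpace ℝ (Fin d) → ℝ)
    (s' : EuclideanSpace ℝ (Fin d) → EuclideanSpace ℝ (Fin d))
    (σ L G : ℝ) (hσ : 0 < σ) (hLσ : σ ≤ L) (hG : 0 < G)
    (hsdiff : ∀ x, HasGradientAt s (s' x) x)
    (hsc : ∀ u v, s u ≥ s v + ⟪s' v, u - v⟫ + σ / 2 * ‖u - v‖ ^ 2)
    (hsmooth : ∀ u v, ‖s' u - s' v‖ ≤ L * ‖u - v‖)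
    (xstar : EuclideanSpace ℝ (Fin d)) (hmin : ∀ x, s xstar ≤ s x)
    (T : ℕ) (x : ℕ → EuclideanSpace ℝ (Fin d))
    (ℓ : ℕ → EuclideanSpace ℝ (Fin d) → ℝ)
    (ℓ' : ℕ → EuclideanSpace ℝ (Fin d) → EuclideanSpace ℝ (Fin d))
    (hℓdiff : ∀ t x', HasGradientAt (ℓ t) (ℓ' t x') x')
    (hcoincide : ∀ t, ℓ t (x t) = s (x t))
    (hminor : ∀ t x', ℓ t x' ≤ s x')
    (hgradco : ∀ t, ℓ' t (x t) = s' (x t))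
    (hgrad0 : ∀ t, ℓ' t (x t) ≠ 0)
    (hGbound : ∀ t, ‖ℓ' t (x t)‖ ≤ G)
    (α : ℕ → ℝ) (hα : ∀ t, α t = (‖ℓ' t (x t)‖ ^ 2)⁻¹)
    (hregret : ∑ t ∈ Finset.range T, α t * (ℓ t (x t) - ℓ t xstar) ≤
      (1 / (2 * σ)) * ∑ t ∈ Finset.range T,
        α t / (∑ τ ∈ Finset.range (t + 1), α τ)) :
    (T : ℝ) ≤ (L / σ) * (1 + Real.log (G ^ 2 * ∑ t ∈ Finset.range T, α t)) ∧
    ((L / σ) * Real.log 3 ≤ (T : ℝ) →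
      (1 / (3 * G ^ 2)) * Real.exp ((σ / L) * T) ≤ ∑ t ∈ Finset.range T, α t) := by
  have hL : 0 < L := lt_of_lt_of_le hσ hLσ
  have hnormpos : ∀ t, (0:ℝ) < ‖ℓ' t (x t)‖ ^ 2 :=
    fun t => pow_pos (norm_pos_iff.mpr (hgrad0 t)) 2
  have hαpos : ∀ t, 0 < α t := fun t => by rw [hα]; exact inv_pos.2 (hnormpos t)
  -- Step A : T = Σ α_t ‖g_t‖²
  have hA : (T : ℝ) = ∑ t ∈ Finset.range T, α t * ‖ℓ' t (x t)‖ ^ 2 := by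
    have : ∀ t ∈ Finset.range T, α t * ‖ℓ' t (x t)‖ ^ 2 = 1 := by
      intro t _
      rw [hα]
      exact inv_mul_cancel₀ (hnormpos t).ne'
    rw [Finset.sum_congr rfl this]
    simp
  -- Step B : termwise gradient bound
  have hB : ∀ t, α t * ‖ℓ' t (x t)‖ ^ 2 ≤ 2 * L * (α t * (ℓ t (x t) - ℓ t xstar)) := by
    intro t
    have hg : ‖s' (x t)‖ ^ 2 ≤ 2 * L * (s (x t) - s xstar) :=
      gradsq_lemma s s' L hL hsdiff hsmooth xstar hmin (x t)
    have hub : s (x t) - s xstar ≤ ℓ t (x t) - ℓ t xstar := by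
      have := hminor t xstar
      have := hcoincide t
      linarith
    have : ‖ℓ' t (x t)‖ ^ 2 ≤ 2 * L * (ℓ t (x t) - ℓ t xstar) := by
      rw [hgradco t]
      nlinarith
    nlinarith [(hαpos t).le]
  -- Combine with regret bound
  have hTQ : (T : ℝ) ≤ (L / σ) * ∑ t ∈ Finset.range T,
      α t / (∑ τ ∈ Finset.range (t + 1), α τ) := by
    have hsum : ∑ t ∈ Finset.range T, α t * ‖ℓ' t (x t)‖ ^ 2 ≤
        ∑ t ∈ Finset.range T, 2 * L * (α t * (ℓ t (x t) - ℓ t xstar)) :=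
      Finset.sum_le_sum (fun t _ => hB t)
    rw [← Finset.mul_sum] at hsum
    have h2L : (0:ℝ) ≤ 2 * L := by linarith
    have := mul_le_mul_of_nonneg_left hregret h2L
    have heq : 2 * L * ((1 / (2 * σ)) * ∑ t ∈ Finset.range T,
        α t / (∑ τ ∈ Finset.range (t + 1), α τ)) =
        (L / σ) * ∑ t ∈ Finset.range T, α t / (∑ τ ∈ Finset.range (t + 1), α τ) := by
      field_simp
    rw [heq] at this
    linarith [hA ▸ hsum]
  have part1 : (T : ℝ) ≤ (L / σ) * (1 + Real.log (G ^ 2 * ∑ t ∈ Finset.range T, α t)) := by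
    rcases Nat.eq_zero_or_pos T with hT0 | hT1
    · subst hT0
      simp only [Nat.cast_zero, Finset.range_zero, Finset.sum_empty, mul_zero, Real.log_zero,
        add_zero, mul_one]
      positivity
    · have hS : 0 < ∑ t ∈ Finset.range T, α t :=
        Finset.sum_pos (fun i _ => hαpos i) (by simp [Finset.nonempty_range_iff]; omega)
      have hQ := log_sum_aux α hαpos T hT1
      have hα0 : Real.log (G ^ 2) ≤ Real.log (G ^ 2) := le_refl _
      have hlogα0 : -Real.log (α 0) ≤ Real.log (G ^ 2) := by
        rw [hα 0, Real.log_inv, neg_neg]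
        exact Real.log_le_log (hnormpos 0) (by nlinarith [hGbound 0, norm_nonneg (ℓ' 0 (x 0))])
      have hlogmul : Real.log (G ^ 2 * ∑ t ∈ Finset.range T, α t) =
          Real.log (G ^ 2) + Real.log (∑ t ∈ Finset.range T, α t) :=
        Real.log_mul (by positivity) hS.ne'
      have hQ2 : ∑ t ∈ Finset.range T, α t / (∑ τ ∈ Finset.range (t + 1), α τ) ≤
          1 + Real.log (G ^ 2 * ∑ t ∈ Finset.range T, α t) := by
        rw [hlogmul]; linarith
      have hLσpos : (0:ℝ) ≤ L / σ := by positivity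
      calc (T : ℝ) ≤ (L / σ) * ∑ t ∈ Finset.range T, α t /
            (∑ τ ∈ Finset.range (t + 1), α τ) := hTQ
        _ ≤ (L / σ) * (1 + Real.log (G ^ 2 * ∑ t ∈ Finset.range T, α t)) :=
            mul_le_mul_of_nonneg_left hQ2 hLσpos
  refine ⟨part1, fun h3 => ?_⟩
  have hlog3 : (0:ℝ) < Real.log 3 := Real.log_pos (by norm_num)
  have hLσ1 : (1:ℝ) ≤ L / σ := (one_le_div hσ).2 hLσ
  have hTpos : (0:ℝ) < T := lt_of_lt_of_le (by nlinarith) h3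
  have hT1 : 0 < T := by exact_mod_cast hTpos
  have hS : 0 < ∑ t ∈ Finset.range T, α t :=
    Finset.sum_pos (fun i _ => hαpos i) (by simp [Finset.nonempty_range_iff]; omega)
  have hdiv : (σ / L) * T ≤ 1 + Real.log (G ^ 2 * ∑ t ∈ Finset.range T, α t) := by
    have := mul_le_mul_of_nonneg_left part1 (le_of_lt (div_pos hσ hL))
    have heq : σ / L * ((L / σ) * (1 + Real.log (G ^ 2 * ∑ t ∈ Finset.range T, α t))) =
        1 + Real.log (G ^ 2 * ∑ t ∈ Finset.range T, α t) := by
      field_simp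
    rw [heq] at this
    exact this
  have hexp : Real.exp ((σ / L) * T - 1) ≤ G ^ 2 * ∑ t ∈ Finset.range T, α t := by
    have h := Real.exp_le_exp.2 (by linarith :
      (σ / L) * T - 1 ≤ Real.log (G ^ 2 * ∑ t ∈ Finset.range T, α t))
    rwa [Real.exp_log (by positivity)] at h
  have hexpeq : Real.exp ((σ / L) * T - 1) = Real.exp ((σ / L) * T) / Real.exp 1 := by
    rw [Real.exp_sub]
  have he3 : Real.exp 1 ≤ 3 := by
    have := Real.exp_one_lt_d9
    linarith [this]
  have hfin : Real.exp ((σ / L) * T) / 3 ≤ G ^ 2 * ∑ t ∈ Finset.range T, α t := by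
    have hexppos : 0 < Real.exp ((σ / L) * T) := Real.exp_pos _
    have : Real.exp ((σ / L) * T) / 3 ≤ Real.exp ((σ / L) * T) / Real.exp 1 :=
      div_le_div_of_nonneg_left hexppos.le (Real.exp_pos 1) he3
    calc Real.exp ((σ / L) * T) / 3 ≤ Real.exp ((σ / L) * T) / Real.exp 1 := this
      _ = Real.exp ((σ / L) * T - 1) := hexpeq.symm
      _ ≤ G ^ 2 * ∑ t ∈ Finset.range T, α t := hexp
  rw [div_mul_eq_mul_div, one_mul, div_le_iff₀ (by positivity)]
  nlinarith [hfin]
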